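/- Let U and V be two t-structures on a triangulated category T with d(U, V) < +∞. Then d(U, V) = d(U^b, V^b), where U^b and V^b are the restricted bounded t-structures on the common subcategory U_ℕ = V_ℕ. -/

import Mathlib

open CategoryTheory Category Limits Pretriangulated Triangulated

namespace TStructurePaper

variable {C : Type*} [Category C] [Preadditive C] [HasZeroObject C]
  [HasShift C ℤ] [∀ (n : ℤ), (shiftFunctor C n).Additive] [Pretriangulated C]

/-- A t-structure is non-degenerate if every object of `⋂ₙ U_{≤n}` and every object
of `⋂ₙ U_{≥n}` is a zero object. -/
def IsNondegenerate (t : TStructure C) : Prop :=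
  (∀ X : C, (∀ n : ℤ, t.le n X) → IsZero X) ∧
  (∀ X : C, (∀ n : ℤ, t.ge n X) → IsZero X)

/-- A t-structure is stable if `Σ U_{≤0} = U_{≤0}`. -/
def IsStable (t : TStructure C) : Prop :=
  ∀ X : C, t.le 0 X ↔ t.le 0 (X⟦(1 : ℤ)⟧)

/-- A t-structure is hereditary if `Hom(U_{≥0}, U_{≤-2}) = 0`. -/
def IsHereditary (t : TStructure C) : Prop :=
  ∀ ⦃X Y : C⦄, t.ge 0 X → t.le (-2) Y → ∀ f : X ⟶ Y, f = 0

/-- `f` factors through some object satisfying the predicate `P`. -/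
def FactorsThrough (P : C → Prop) {X Y : C} (f : X ⟶ Y) : Prop :=
  ∃ (Z : C) (_ : P Z) (u : X ⟶ Z) (v : Z ⟶ Y), f = u ≫ v

/-- A t-structure is regular if any morphism `f : X → Y` with `Y ∈ U_{≤m}` for some `m`
which factors through an object of `U_{≥n}` for every `n` vanishes, and dually. -/
def IsRegular (t : TStructure C) : Prop :=
  (∀ ⦃X Y : C⦄, (∃ m : ℤ, t.le m Y) → ∀ f : X ⟶ Y,
      (∀ n : ℤ, FactorsThrough (t.ge n) f) → f = 0) ∧
  (∀ ⦃X Y : C⦄, (∃ m : ℤ, t.ge m X) → ∀ f : X ⟶ Y,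
      (∀ n : ℤ, FactorsThrough (t.le n) f) → f = 0)

/-- `Hom(U_{≥0}, U_{≤-(d+1)}) = 0`. -/
def HasGlDimAtMost (t : TStructure C) (d : ℕ) : Prop :=
  ∀ ⦃X Y : C⦄, t.ge 0 X → t.le (-(d + 1)) Y → ∀ f : X ⟶ Y, f = 0

/-- The global dimension of a t-structure, as an element of `ℕ∞`. -/
noncomputable def glDim (t : TStructure C) : ℕ∞ :=
  sInf {e : ℕ∞ | ∃ d : ℕ, e = d ∧ HasGlDimAtMost t d}

/-- `d(U,V) ≤ d`, i.e. `V_{≤m} ⊆ U_{≤0} ⊆ V_{≤m+d}` for some integer `m`. -/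
def DistAtMost (u v : TStructure C) (d : ℕ) : Prop :=
  ∃ m : ℤ, (∀ X : C, v.le m X → u.le 0 X) ∧ (∀ X : C, u.le 0 X → v.le (m + d) X)

/-- The distance between two t-structures, as an element of `ℕ∞`. -/
noncomputable def dist (u v : TStructure C) : ℕ∞ :=
  sInf {e : ℕ∞ | ∃ d : ℕ, e = d ∧ DistAtMost u v d}

/-- Membership of the subcategory `U_ℕ = ⋃_{n ≥ 0} U_{[-n, n]}`. -/
def InUN (t : TStructure C) (X : C) : Prop :=
  ∃ n : ℕ, t.ge (-(n : ℤ)) X ∧ t.le (n : ℤ) X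

/-- A t-structure is bounded if `⋃ₙ U_{≤n} = T = ⋃ₙ U_{≥n}`. -/
def IsBounded (t : TStructure C) : Prop :=
  (∀ X : C, ∃ n : ℤ, t.le n X) ∧ (∀ X : C, ∃ n : ℤ, t.ge n X)

/-- Membership of the heart `U₀ = U_{≤0} ∩ U_{≥0}`. -/
def InHeart (t : TStructure C) (X : C) : Prop :=
  t.le 0 X ∧ t.ge 0 X

/-- Truncation data for a t-structure: functors `τ_{≤n}` right adjoint to the inclusions
`U_{≤n} ↪ T` (with counit `ι`) and functors `τ_{≥n}` left adjoint to the inclusions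
`U_{≥n} ↪ T` (with unit `π`). -/
structure TruncData (t : TStructure C) where
  τle (n : ℤ) : C ⥤ C
  τge (n : ℤ) : C ⥤ C
  ι (n : ℤ) : τle n ⟶ 𝟭 C
  π (n : ℤ) : 𝟭 C ⟶ τge n
  le_mem (n : ℤ) (X : C) : t.le n ((τle n).obj X)
  ge_mem (n : ℤ) (X : C) : t.ge n ((τge n).obj X)
  le_adj (n : ℤ) (A X : C) (hA : t.le n A) :
    Function.Bijective (fun g : A ⟶ (τle n).obj X => g ≫ (ι n).app X)
  ge_adj (n : ℤ) (X B : C) (hB : t.ge n B) :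
    Function.Bijective (fun g : (τge n).obj X ⟶ B => (π n).app X ≫ g)

/-- The cohomological functor `Hⁿ = Σⁿ ∘ τ_{≤n} ∘ τ_{≥n}` associated to a t-structure. -/
def TruncData.H {t : TStructure C} (d : TruncData t) (n : ℤ) : C ⥤ C :=
  d.τge n ⋙ d.τle n ⋙ shiftFunctor C n


/-- `d(U^b, V^b) ≤ d` for the restricted bounded t-structures on the common subcategory
`T^b = U_ℕ = V_ℕ`: there is an integer `m` with `V^b_{≤m} ⊆ U^b_{≤0} ⊆ V^b_{≤m+d}`,
the inclusions being among objects of `T^b`. -/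
def DistAtMostB (u v : TStructure C) (d : ℕ) : Prop :=
  ∃ m : ℤ, (∀ X : C, InUN u X → v.le m X → u.le 0 X) ∧
           (∀ X : C, InUN u X → u.le 0 X → v.le (m + d) X)

/-- The distance `d(U^b, V^b)` between the restricted bounded t-structures, computed in
the subcategory `T^b = U_ℕ`. -/
noncomputable def distB (u v : TStructure C) : ℕ∞ :=
  sInf {e : ℕ∞ | ∃ d : ℕ, e = d ∧ DistAtMostB u v d}

lemma zero_of_lt (t : TStructure C) {X Y : C} (f : X ⟶ Y) (a b : ℤ) (hab : a < b)
    (hX : t.le a X) (hY : t.ge b Y) : f = 0 := by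
  have hX' : t.le 0 (X⟦a⟧) := t.le_shift a a 0 (by omega) X hX
  have hY' : t.ge (b - a) (Y⟦a⟧) := t.ge_shift b a (b - a) (by omega) Y hY
  have hY'' : t.ge 1 (Y⟦a⟧) := t.ge_antitone (show (1 : ℤ) ≤ b - a by omega) _ hY'
  have hz : (shiftFunctor C a).map f = 0 := t.zero' _ hX' hY''
  exact (shiftFunctor C a).map_injective (by rw [hz, Functor.map_zero])

lemma le_iff_orth (t : TStructure C) (n : ℤ) (Z : C) :
    t.le n Z ↔ ∀ ⦃B : C⦄, t.ge (n + 1) B → ∀ f : Z ⟶ B, f = 0 := by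
  constructor
  · intro hZ B hB f
    exact zero_of_lt t f n (n + 1) (by omega) hZ hB
  · intro H
    obtain ⟨A, B, hA, hB, f, g, w, mem⟩ := t.exists_triangle Z n (n + 1) rfl
    have hg : g = 0 := H hB g
    have hBzero : IsZero B := by
      obtain ⟨ψ, hψ⟩ := Triangle.yoneda_exact₂ _ (rot_of_distTriang _ mem) (𝟙 B)
        (by show g ≫ 𝟙 B = 0; rw [hg, zero_comp])
      have hψ0 : ψ = 0 :=
        zero_of_lt t ψ (n - 1) (n + 1) (by omega) (t.le_shift n 1 (n - 1) (by omega) A hA) hB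
      rw [IsZero.iff_id_eq_zero, hψ, hψ0, comp_zero]; rfl
    have hiso : IsIso f := (Triangle.isZero₃_iff_isIso₁ _ mem).1 hBzero
    exact (t.le n).prop_of_iso (asIso f) hA

lemma le_ext (t : TStructure C) (n : ℤ) (T : Triangle C) (hT : T ∈ distTriang C)
    (h1 : t.le n T.obj₁) (h3 : t.le n T.obj₃) : t.le n T.obj₂ := by
  rw [le_iff_orth]
  intro B hB f
  obtain ⟨g, rfl⟩ := Triangle.yoneda_exact₂ T hT f
    (zero_of_lt t _ n (n + 1) (by omega) h1 hB)
  rw [zero_of_lt t g n (n + 1) (by omega) h3 hB, comp_zero]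

/-- Truncation triangle that remembers an upper bound on `X`. -/
lemma trunc_with_bound (t : TStructure C) (X : C) (N k : ℤ) (hNk : N ≤ k + 1)
    (hX : t.le k X) :
    ∃ (A B : C) (_ : t.le N A) (_ : t.ge (N + 1) B) (_ : t.le k B)
      (f : A ⟶ X) (g : X ⟶ B) (w : B ⟶ A⟦(1 : ℤ)⟧),
      Triangle.mk f g w ∈ distTriang C := by
  obtain ⟨A, B, hA, hB, f, g, w, mem⟩ := t.exists_triangle X N (N + 1) rfl
  refine ⟨A, B, hA, hB, ?_, f, g, w, mem⟩
  rw [le_iff_orth]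
  intro W hW φ
  obtain ⟨ψ, rfl⟩ := Triangle.yoneda_exact₃ _ mem φ
    (zero_of_lt t _ k (k + 1) (by omega) hX hW)
  rw [zero_of_lt t ψ (N - 1) (k + 1) (by omega) (t.le_shift N 1 (N - 1) (by omega) A hA) hW,
    comp_zero]; rfl

/-- Shifting an inclusion of aisles. -/
lemma le_incl_shift {s t : TStructure C} {a b : ℤ} (h : ∀ X : C, s.le a X → t.le b X)
    (j : ℤ) (X : C) (hX : s.le (a + j) X) : t.le (b + j) X := by
  rw [← s.shift_le j a (a + j) (by omega), ObjectProperty.prop_shift_iff] at hX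
  rw [← t.shift_le j b (b + j) (by omega), ObjectProperty.prop_shift_iff]
  exact h _ hX

lemma distAtMostB_of_distAtMost {u v : TStructure C} {d : ℕ} (h : DistAtMost u v d) :
    DistAtMostB u v d := by
  obtain ⟨m, h1, h2⟩ := h
  exact ⟨m, fun X _ hX => h1 X hX, fun X _ hX => h2 X hX⟩

lemma distAtMost_of_distAtMostB {u v : TStructure C} {d' d : ℕ}
    (h' : DistAtMost u v d') (hb : DistAtMostB u v d) : DistAtMost u v d := by
  obtain ⟨m', h'1, h'2⟩ := h'
  obtain ⟨m, h1, h2⟩ := hb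
  refine ⟨m, ?_, ?_⟩
  · intro X hX
    set k : ℤ := max 0 (m - m') with hk
    have hXk : u.le k X := by
      have : v.le (m' + k) X := v.le_monotone (show m ≤ m' + k by omega) X hX
      simpa using le_incl_shift h'1 k X this
    set N : ℤ := min (-1) (m - m' - (d' : ℤ) - 1) with hN
    obtain ⟨A, B, hA, hBge, hBk, f, g, w, mem⟩ :=
      trunc_with_bound u X N k (by omega) hXk
    -- A ∈ v.le (m' + d' + N) ⊆ v.le (m - 1)
    have hAv : v.le (m - 1) A := by
      have : v.le (m' + (d' : ℤ) + N) A := by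
        exact le_incl_shift h'2 N A (by rw [zero_add]; exact hA)
      exact v.le_monotone (show m' + (d' : ℤ) + N ≤ m - 1 by omega) A this
    -- B is an extension of X and A⟦1⟧, hence B ∈ v.le m
    have hBv : v.le m B := by
      refine le_ext v m _ (rot_of_distTriang _ mem) hX ?_
      exact v.le_monotone (show m - 2 ≤ m by omega) _
        (v.le_shift (m - 1) 1 (m - 2) (by omega) A hAv)
    -- B is bounded for u
    have hBUN : InUN u B := by
      refine ⟨(max k (-(N + 1))).toNat, ?_, ?_⟩
      · exact u.ge_antitone (show (-((max k (-(N + 1))).toNat : ℤ)) ≤ N + 1 by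
          have := Int.self_le_toNat (max k (-(N + 1))); omega) B hBge
      · exact u.le_monotone (show k ≤ ((max k (-(N + 1))).toNat : ℤ) by
          have := Int.self_le_toNat (max k (-(N + 1))); omega) B hBk
    have hB0 : u.le 0 B := h1 B hBUN hBv
    -- X is an extension of A and B
    refine le_ext u 0 _ mem ?_ hB0
    exact u.le_monotone (show N ≤ (0 : ℤ) by omega) A hA
  · intro X hX
    set N : ℤ := min (-1) (m + (d : ℤ) - m' - (d' : ℤ)) with hN
    obtain ⟨A, B, hA, hBge, hB0, f, g, w, mem⟩ :=
      trunc_with_bound u X N 0 (by omega) hX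
    have hBUN : InUN u B := by
      refine ⟨(-(N + 1)).toNat, ?_, ?_⟩
      · exact u.ge_antitone (show (-(((-(N + 1)).toNat : ℤ))) ≤ N + 1 by
          have := Int.self_le_toNat (-(N + 1)); omega) B hBge
      · exact u.le_monotone (show (0 : ℤ) ≤ (((-(N + 1)).toNat : ℤ)) by positivity) B hB0
    have hBv : v.le (m + d) B := h2 B hBUN hB0
    have hAv : v.le (m + d) A := by
      have : v.le (m' + (d' : ℤ) + N) A := by
        exact le_incl_shift h'2 N A (by rw [zero_add]; exact hA)
      exact v.le_monotone (show m' + (d' : ℤ) + N ≤ m + d by omega) A this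
    exact le_ext v (m + d) _ mem hAv hBv

/-- If `d(U,V) < +∞`, then `d(U,V) = d(U^b, V^b)`. -/
theorem statement17 (u v : TStructure C) (h : dist u v < ⊤) :
    dist u v = distB u v := by
  have hne : {e : ℕ∞ | ∃ d : ℕ, e = d ∧ DistAtMost u v d}.Nonempty := by
    by_contra hc
    rw [Set.not_nonempty_iff_eq_empty] at hc
    rw [dist, hc, sInf_empty] at h
    exact lt_irrefl _ h
  obtain ⟨e, d', rfl, hd'⟩ := hne
  have hset : {e : ℕ∞ | ∃ d : ℕ, e = d ∧ DistAtMost u v d} =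
      {e : ℕ∞ | ∃ d : ℕ, e = d ∧ DistAtMostB u v d} := by
    ext e
    constructor
    · rintro ⟨d, rfl, hd⟩
      exact ⟨d, rfl, distAtMostB_of_distAtMost hd⟩
    · rintro ⟨d, rfl, hd⟩
      exact ⟨d, rfl, distAtMost_of_distAtMostB hd' hd⟩
  rw [dist, distB, hset]

end TStructurePaper
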